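/- Let A be an extreme point of 𝐔_m with ∑_{i,j=1}^m a_{ij} = m (i.e., A ∈ Extr 𝐔_m is saturated). Then every row of A contains at least one nonzero entry. Conversely, if A is an extreme point of 𝐔_m and every row of A contains at least one nonzero entry, then ∑_{i,j=1}^m a_{ij} = m. -/

import Mathlib

open Matrix Finset

def IsInU {m : ℕ} (A : Matrix (Fin m) (Fin m) ℝ) : Prop :=
  A.IsSymm ∧ (∀ i j, 0 ≤ A i j) ∧
    ∀ α : Finset (Fin m), ∑ i ∈ α, ∑ j ∈ α, A i j ≤ (α.card : ℝ)

def IsInUtop {m : ℕ} (A : Matrix (Fin m) (Fin m) ℝ) : Prop :=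
  IsInU A ∧ ∑ i, ∑ j, A i j = (m : ℝ)

def IsExtremeIn {m : ℕ} (S : Matrix (Fin m) (Fin m) ℝ → Prop)
    (A : Matrix (Fin m) (Fin m) ℝ) : Prop :=
  S A ∧ ∀ A₁ A₂, S A₁ → S A₂ → A₁ + A₂ = (2 : ℝ) • A → A₁ = A ∧ A₂ = A

lemma supermod {m : ℕ} (A : Matrix (Fin m) (Fin m) ℝ) (hpos : ∀ i j, 0 ≤ A i j)
    (α β : Finset (Fin m)) :
    (∑ i ∈ α, ∑ j ∈ α, A i j) + (∑ i ∈ β, ∑ j ∈ β, A i j) ≤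
      (∑ i ∈ α ∪ β, ∑ j ∈ α ∪ β, A i j) + (∑ i ∈ α ∩ β, ∑ j ∈ α ∩ β, A i j) := by
  classical
  have key : ∀ s : Finset (Fin m), ∑ i ∈ s, ∑ j ∈ s, A i j
      = ∑ p ∈ s ×ˢ s, A p.1 p.2 := by
    intro s; rw [Finset.sum_product]
  have hui : (∑ p ∈ (α ×ˢ α) ∪ (β ×ˢ β), A p.1 p.2) +
      (∑ p ∈ (α ×ˢ α) ∩ (β ×ˢ β), A p.1 p.2)
      = (∑ p ∈ α ×ˢ α, A p.1 p.2) + (∑ p ∈ β ×ˢ β, A p.1 p.2) :=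
    Finset.sum_union_inter
  have heq : (α ×ˢ α) ∩ (β ×ˢ β) = (α ∩ β) ×ˢ (α ∩ β) :=
    Finset.product_inter_product
  have hsub : (∑ p ∈ (α ×ˢ α) ∪ (β ×ˢ β), A p.1 p.2) ≤
      ∑ p ∈ (α ∪ β) ×ˢ (α ∪ β), A p.1 p.2 := by
    apply Finset.sum_le_sum_of_subset_of_nonneg
    · exact Finset.union_subset
        (Finset.product_subset_product subset_union_left subset_union_left)
        (Finset.product_subset_product subset_union_right subset_union_right)
    · exact fun p _ _ => hpos _ _
  rw [key, key, key, key]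
  rw [heq] at hui
  linarith

theorem stmt_17 {m : ℕ} (A : Matrix (Fin m) (Fin m) ℝ)
    (hA : IsExtremeIn IsInU A) :
    ∑ i, ∑ j, A i j = (m : ℝ) ↔ ∀ i, ∃ j, A i j ≠ 0 := by
  classical
  obtain ⟨⟨hsymm, hpos, hcon⟩, hext⟩ := hA
  constructor
  · -- forward: saturated → each row nonzero
    intro hsum i₀
    by_contra h
    push_neg at h
    have hcol : ∀ i, A i i₀ = 0 := fun i => (hsymm.apply i₀ i).trans (h i)
    have key : ∑ i ∈ univ.erase i₀, ∑ j ∈ univ.erase i₀, A i j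
        = ∑ i, ∑ j, A i j := by
      have hout : ∑ i ∈ univ.erase i₀, (∑ j ∈ univ.erase i₀, A i j)
          = ∑ i : Fin m, ∑ j ∈ univ.erase i₀, A i j :=
        Finset.sum_erase univ (Finset.sum_eq_zero fun j _ => h j)
      rw [hout]
      exact Finset.sum_congr rfl fun i _ => Finset.sum_erase univ (hcol i)
    have hle := hcon (univ.erase i₀)
    rw [key, hsum] at hle
    have hm : 1 ≤ m := Fin.pos i₀
    have hcard : ((univ.erase i₀).card : ℝ) = (m : ℝ) - 1 := by
      rw [Finset.card_erase_of_mem (Finset.mem_univ i₀), Finset.card_univ,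
        Fintype.card_fin, Nat.cast_sub hm, Nat.cast_one]
    rw [hcard] at hle
    linarith
  · -- converse
    intro hrows
    by_cases hT : ∀ i : Fin m, ∃ α : Finset (Fin m), i ∈ α ∧
        ∑ i ∈ α, ∑ j ∈ α, A i j = (α.card : ℝ)
    · -- univ is tight
      choose T hTi hTt using hT
      have tight_union : ∀ α β : Finset (Fin m),
          ∑ i ∈ α, ∑ j ∈ α, A i j = (α.card : ℝ) →
          ∑ i ∈ β, ∑ j ∈ β, A i j = (β.card : ℝ) →
          ∑ i ∈ α ∪ β, ∑ j ∈ α ∪ β, A i j = ((α ∪ β).card : ℝ) := by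
        intro α β ha hb
        have h1 := supermod A hpos α β
        have h2 := hcon (α ∪ β)
        have h3 := hcon (α ∩ β)
        have hcards : ((α ∪ β).card : ℝ) + ((α ∩ β).card : ℝ)
            = (α.card : ℝ) + (β.card : ℝ) := by
          norm_cast
          exact Finset.card_union_add_card_inter α β
        linarith
      have huniv : ∀ s : Finset (Fin m),
          ∑ i ∈ s.sup T, ∑ j ∈ s.sup T, A i j = ((s.sup T).card : ℝ) := by
        intro s
        induction s using Finset.induction_on with
        | empty => simp
        | insert _ _ hx ih =>
          rw [Finset.sup_insert]
          exact tight_union _ _ (hTt _) ih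
      have hfin := huniv Finset.univ
      have hU : Finset.univ.sup T = (Finset.univ : Finset (Fin m)) :=
        Finset.eq_univ_of_forall fun i =>
          Finset.mem_of_subset (Finset.le_sup (Finset.mem_univ i)) (hTi i)
      rw [hU] at hfin
      simpa [Finset.card_univ] using hfin
    · -- perturbation
      exfalso
      push_neg at hT
      obtain ⟨i₀, hi₀⟩ := hT
      obtain ⟨j₀, hj₀⟩ := hrows i₀
      have haij : 0 < A i₀ j₀ := lt_of_le_of_ne (hpos i₀ j₀) (Ne.symm hj₀)
      have hslack : ∀ α : Finset (Fin m), i₀ ∈ α →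
          ∑ i ∈ α, ∑ j ∈ α, A i j < (α.card : ℝ) :=
        fun α hα => lt_of_le_of_ne (hcon α) (hi₀ α hα)
      obtain ⟨ε, hε0, hεa, hεs⟩ : ∃ ε : ℝ, 0 < ε ∧ ε ≤ A i₀ j₀ ∧
          ∀ α : Finset (Fin m), i₀ ∈ α →
            (∑ i ∈ α, ∑ j ∈ α, A i j) + 2 * ε ≤ (α.card : ℝ) := by
        set s : Finset (Finset (Fin m)) := Finset.univ.filter (fun α => i₀ ∈ α) with hs
        have hne : s.Nonempty := ⟨{i₀}, by simp [hs]⟩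
        set δ : ℝ := s.inf' hne (fun α => ((α.card : ℝ) - ∑ i ∈ α, ∑ j ∈ α, A i j)) with hδ
        have hδpos : 0 < δ := by
          rw [hδ, Finset.lt_inf'_iff]
          intro α hα
          rw [hs, Finset.mem_filter] at hα
          linarith [hslack α hα.2]
        refine ⟨min (A i₀ j₀) (δ / 2), lt_min haij (by linarith), min_le_left _ _, ?_⟩
        intro α hα
        have h1 : δ ≤ (α.card : ℝ) - ∑ i ∈ α, ∑ j ∈ α, A i j :=
          Finset.inf'_le _ (by simp [hs, hα])
        have h2 : min (A i₀ j₀) (δ / 2) ≤ δ / 2 := min_le_right _ _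
        linarith
      set E : Matrix (Fin m) (Fin m) ℝ :=
        fun i j => if (i = i₀ ∧ j = j₀) ∨ (i = j₀ ∧ j = i₀) then 1 else 0 with hE
      have hEsymm : E.IsSymm := by
        ext i j
        rw [Matrix.transpose_apply]; simp only [hE]
        have hiff : ((j = i₀ ∧ i = j₀) ∨ (j = j₀ ∧ i = i₀))
            ↔ ((i = i₀ ∧ j = j₀) ∨ (i = j₀ ∧ j = i₀)) := by tauto
        rw [if_congr hiff rfl rfl]
      have hEpos : ∀ i j, 0 ≤ E i j := by
        intro i j; simp only [hE]; positivity
      have hEsum : ∀ α : Finset (Fin m), i₀ ∉ α →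
          ∑ i ∈ α, ∑ j ∈ α, E i j = 0 := by
        intro α hα
        refine Finset.sum_eq_zero fun i hi => Finset.sum_eq_zero fun j hj => ?_
        simp only [hE]
        rw [if_neg]
        rintro (⟨rfl, rfl⟩ | ⟨rfl, rfl⟩) <;> exact hα (by assumption)
      have hEtot : ∑ i : Fin m, ∑ j : Fin m, E i j ≤ 2 := by
        have hb : ∀ i j : Fin m, E i j ≤
            (if i = i₀ ∧ j = j₀ then (1:ℝ) else 0) +
            (if i = j₀ ∧ j = i₀ then (1:ℝ) else 0) := by
          intro i j
          simp only [hE]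
          split_ifs <;> norm_num <;> tauto
        calc ∑ i : Fin m, ∑ j : Fin m, E i j
            ≤ ∑ i : Fin m, ∑ j : Fin m,
              ((if i = i₀ ∧ j = j₀ then (1:ℝ) else 0) +
               (if i = j₀ ∧ j = i₀ then (1:ℝ) else 0)) := by
              refine Finset.sum_le_sum fun i _ => Finset.sum_le_sum fun j _ => hb i j
          _ = 2 := by
              rw [show (2:ℝ) = 1 + 1 by norm_num]
              rw [Finset.sum_congr rfl (fun i _ => Finset.sum_add_distrib),
                Finset.sum_add_distrib]
              congr 1
              · rw [Finset.sum_congr rfl (fun i (_ : i ∈ univ) => by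
                  rw [show (∑ j : Fin m, if i = i₀ ∧ j = j₀ then (1:ℝ) else 0)
                      = if i = i₀ then 1 else 0 from by
                    by_cases hi : i = i₀ <;> simp [hi]])]
                simp
              · rw [Finset.sum_congr rfl (fun i (_ : i ∈ univ) => by
                  rw [show (∑ j : Fin m, if i = j₀ ∧ j = i₀ then (1:ℝ) else 0)
                      = if i = j₀ then 1 else 0 from by
                    by_cases hi : i = j₀ <;> simp [hi]])]
                simp
      have hEsum2 : ∀ α : Finset (Fin m), ∑ i ∈ α, ∑ j ∈ α, E i j ≤ 2 := by
        intro α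
        calc ∑ i ∈ α, ∑ j ∈ α, E i j
            ≤ ∑ i ∈ α, ∑ j : Fin m, E i j := by
              refine Finset.sum_le_sum fun i _ => ?_
              exact Finset.sum_le_sum_of_subset_of_nonneg (Finset.subset_univ α)
                (fun j _ _ => hEpos i j)
          _ ≤ ∑ i : Fin m, ∑ j : Fin m, E i j :=
              Finset.sum_le_sum_of_subset_of_nonneg (Finset.subset_univ α)
                (fun i _ _ => Finset.sum_nonneg fun j _ => hEpos i j)
          _ ≤ 2 := hEtot
      have h1 : IsInU (A + ε • E) := by
        refine ⟨hsymm.add (hEsymm.smul ε), fun i j => ?_, ?_⟩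
        · have h1 := hEpos i j; have h2 := hpos i j
          simp only [Matrix.add_apply, Matrix.smul_apply, smul_eq_mul]
          nlinarith
        · intro α
          simp only [Matrix.add_apply, Matrix.smul_apply, smul_eq_mul,
            Finset.sum_add_distrib, ← Finset.mul_sum]
          by_cases hα : i₀ ∈ α
          · have h1 := hεs α hα
            have h2 := hEsum2 α
            nlinarith
          · rw [hEsum α hα, mul_zero, add_zero]
            exact hcon α
      have h2 : IsInU (A - ε • E) := by
        refine ⟨?_, ?_, ?_⟩
        · have := hsymm.add ((hEsymm.smul (-ε)))
          simpa [sub_eq_add_neg, ← neg_smul] using this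
        · intro i j
          simp only [Matrix.sub_apply, Matrix.smul_apply, smul_eq_mul, sub_nonneg]
          by_cases hij : (i = i₀ ∧ j = j₀) ∨ (i = j₀ ∧ j = i₀)
          · have hEij : E i j = 1 := by simp only [hE]; rw [if_pos hij]
            have hAij : A i j = A i₀ j₀ := by
              rcases hij with ⟨rfl, rfl⟩ | ⟨rfl, rfl⟩
              · rfl
              · exact hsymm.apply _ _
            rw [hEij, hAij]; linarith
          · have hEij : E i j = 0 := by simp only [hE]; rw [if_neg hij]
            rw [hEij, mul_zero]; exact hpos i j
        · intro α
          have hE0 : 0 ≤ ∑ i ∈ α, ∑ j ∈ α, E i j :=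
            Finset.sum_nonneg fun i _ => Finset.sum_nonneg fun j _ => hEpos i j
          have := hcon α
          simp only [Matrix.sub_apply, Matrix.smul_apply, smul_eq_mul,
            Finset.sum_sub_distrib, ← Finset.mul_sum]
          nlinarith
      have hadd : (A + ε • E) + (A - ε • E) = (2 : ℝ) • A := by
        ext i j
        simp only [Matrix.add_apply, Matrix.sub_apply, Matrix.smul_apply, smul_eq_mul]
        ring
      have hfix := (hext _ _ h1 h2 hadd).1
      have hE1 : E i₀ j₀ = 1 := by simp [hE]
      have := congrFun (congrFun hfix i₀) j₀
      simp only [Matrix.add_apply, Matrix.smul_apply, smul_eq_mul, hE1, mul_one] at this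
      linarith
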